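/- The pair (α_n, β_n) with α_0 = 1, α_n = q^{n^2}(q^n - q^{-n}) for n ≥ 1, and β_n = q^n/(q;q)_n^2, is a Bailey pair relative to 1: β_n = ∑_{r=0}^n α_r / ((q;q)_{n-r} (q;q)_{n+r}). -/

import Mathlib

open scoped BigOperators

noncomputable def qPoch (a q : ℂ) (n : ℕ) : ℂ := ∏ j ∈ Finset.range n, (1 - a * q ^ j)

noncomputable def qPochInf (a q : ℂ) : ℂ := ∏' j : ℕ, (1 - a * q ^ j)

lemma qPoch_succ (q : ℂ) (k : ℕ) :
    qPoch q q (k+1) = qPoch q q k * (1 - q * q ^ k) := Finset.prod_range_succ _ _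

lemma qPoch_zero (q : ℂ) : qPoch q q 0 = 1 := Finset.prod_range_zero _

lemma tele_mid (q A U C d e : ℂ)
    (hb : 1 - q*(A*U) ≠ 0) (h1 : 1 - q*(A*(A*U)) ≠ 0)
    (h2 : 1 - q*(q*(A*(A*U))) ≠ 0) (h3 : 1 - q*U ≠ 0)
    (hd : d ≠ 0) (he : e ≠ 0) :
    (C*(A*A) - C) / ((d*(1 - q*U)) * (e*(1 - q*(A*(A*U)))))
      - q/(1 - q*(A*U))^2 * ((C*(A*A) - C)/(d*e))
    = C*(A*A)*(1 - q*(q*(A*(A*U)))) * (1 - q - 2*(q*(A*U)) + q*(q*(A*(A*U))) + q*U) /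
        ((1 - q*(A*U))^2 * (d * (e*(1 - q*(A*(A*U)))*(1 - q*(q*(A*(A*U))))))) -
      C*(1 - q*(A*(A*U))) * (1 - q - 2*(q*(A*U)) + q*(A*(A*U)) + q*(q*U)) /
        ((1 - q*(A*U))^2 * ((d*(1 - q*U)) * (e*(1 - q*(A*(A*U)))))) := by
  have hb2 : (1 - q*(A*U))^2 ≠ 0 := pow_ne_zero _ hb
  have hDL1 : (d*(1 - q*U)) * (e*(1 - q*(A*(A*U)))) ≠ 0 :=
    mul_ne_zero (mul_ne_zero hd h3) (mul_ne_zero he h1)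
  have hDL2 : d*e ≠ 0 := mul_ne_zero hd he
  have hDR1 : (1 - q*(A*U))^2 * (d * (e*(1 - q*(A*(A*U)))*(1 - q*(q*(A*(A*U)))))) ≠ 0 :=
    mul_ne_zero hb2 (mul_ne_zero hd (mul_ne_zero (mul_ne_zero he h1) h2))
  have hDR2 : (1 - q*(A*U))^2 * ((d*(1 - q*U)) * (e*(1 - q*(A*(A*U))))) ≠ 0 :=
    mul_ne_zero hb2 hDL1
  rw [div_mul_div_comm, div_sub_div _ _ hDL1 (mul_ne_zero hb2 hDL2),
    div_sub_div _ _ hDR1 hDR2,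
    div_eq_div_iff (mul_ne_zero hDL1 (mul_ne_zero hb2 hDL2)) (mul_ne_zero hDR1 hDR2)]
  ring

lemma tele_zero (q b p : ℂ) (hb : 1 - b ≠ 0) (hqb : 1 - q*b ≠ 0) (hp : p ≠ 0) :
    1 / (p*(1-b) * (p*(1-b)))
      - q/(1-b)^2 * (1/(p*p))
    = (1 - q*b) * (1 - q - 2*b + q*b + b) /
        ((1-b)^2 * (p * (p*(1-b)*(1 - q*b)))) := by
  have hb2 : (1-b)^2 ≠ 0 := pow_ne_zero _ hb
  have h1 : p*(1-b) * (p*(1-b)) ≠ 0 :=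
    mul_ne_zero (mul_ne_zero hp hb) (mul_ne_zero hp hb)
  have h2 : p*p ≠ 0 := mul_ne_zero hp hp
  have h3 : (1-b)^2 * (p * (p*(1-b)*(1 - q*b))) ≠ 0 :=
    mul_ne_zero hb2 (mul_ne_zero hp (mul_ne_zero (mul_ne_zero hp hb) hqb))
  rw [div_mul_div_comm, div_sub_div _ _ h1 (mul_ne_zero hb2 h2),
    div_eq_div_iff (mul_ne_zero h1 (mul_ne_zero hb2 h2)) h3]
  ring

lemma tele_top (q B C e : ℂ) (hb : 1 - B ≠ 0) (he : e ≠ 0) :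
    (C*(B*B) - C) / (1 * e)
    = 0 - C * (1 - B*B) * (1 - q - 2*B + B*B + q) / ((1-B)^2 * (1 * e)) := by
  have hb2 : (1-B)^2 ≠ 0 := pow_ne_zero _ hb
  have he1 : (1:ℂ) * e ≠ 0 := by simpa using he
  rw [zero_sub, ← neg_div, div_eq_div_iff he1 (mul_ne_zero hb2 he1)]
  ring

theorem stmt15 (q : ℂ) (hq : ∀ k : ℕ, q ^ (k + 1) ≠ 1) (hq0 : q ≠ 0) (n : ℕ) :
    q ^ n / qPoch q q n ^ 2
      = ∑ r ∈ Finset.range (n + 1),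
          (if r = 0 then (1 : ℂ) else q ^ (r ^ 2) * (q ^ r - (q ^ r)⁻¹)) /
            (qPoch q q (n - r) * qPoch q q (n + r)) := by
  have hone : ∀ k : ℕ, (1:ℂ) - q ^ (k+1) ≠ 0 := fun k =>
    sub_ne_zero.mpr fun h => hq k h.symm
  have hone2 : ∀ (k : ℕ) (x : ℂ), x = q^(k+1) → (1:ℂ) - x ≠ 0 := fun k x hx => by
    rw [hx]; exact hone k
  have hone' : ∀ k : ℕ, (1:ℂ) - q * q ^ k ≠ 0 := fun k => hone2 k _ (by ring)
  have hpoch : ∀ k : ℕ, qPoch q q k ≠ 0 := by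
    intro k
    exact Finset.prod_ne_zero_iff.mpr fun j _ => hone' j
  induction n with
  | zero => simp [qPoch]
  | succ n ih =>
    show q ^ (n+1) / qPoch q q (n+1) ^ 2
      = ∑ r ∈ Finset.range (n+2),
          (if r = 0 then (1 : ℂ) else q ^ (r ^ 2) * (q ^ r - (q ^ r)⁻¹)) /
            (qPoch q q (n+1-r) * qPoch q q (n+1+r))
    set G : ℕ → ℂ := fun s =>
      if 1 ≤ s ∧ s ≤ n+1 then
        q ^ (s^2 - s) * (1 - q ^ (n+1+s)) *
          (1 - q - 2*q^(n+1) + q^(n+1+s) + q^(n+2-s)) /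
          ((1 - q^(n+1))^2 * (qPoch q q (n+1-s) * qPoch q q (n+1+s)))
      else 0 with hG
    have hGzero : G 0 = 0 := by
      simp only [hG]; rw [if_neg (by omega : ¬ (1 ≤ 0 ∧ 0 ≤ n+1))]
    have hGtop : G (n+2) = 0 := by
      simp only [hG]; rw [if_neg (by omega : ¬ (1 ≤ n+2 ∧ n+2 ≤ n+1))]
    have alpha_eq : ∀ r : ℕ, 1 ≤ r →
        q ^ (r ^ 2) * (q ^ r - (q ^ r)⁻¹) = q ^ (r^2+r) - q ^ (r^2-r) := by
      intro r hr
      have hle : r ≤ r^2 := by nlinarith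
      have h2 : q ^ (r^2-r) * q ^ r = q ^ (r^2) := by
        rw [← pow_add]; congr 1; omega
      rw [mul_sub, ← pow_add, ← h2, mul_assoc,
        mul_inv_cancel₀ (pow_ne_zero r hq0), mul_one]
    have key : ∀ r ∈ Finset.range (n+2),
        (if r = 0 then (1:ℂ) else q ^ (r ^ 2) * (q ^ r - (q ^ r)⁻¹)) /
            (qPoch q q (n+1-r) * qPoch q q (n+1+r))
          - (if r ≤ n then q/(1-q^(n+1))^2 *
              ((if r = 0 then (1:ℂ) else q ^ (r ^ 2) * (q ^ r - (q ^ r)⁻¹)) /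
                (qPoch q q (n-r) * qPoch q q (n+r))) else 0)
        = G (r+1) - G r := by
      intro r hr
      simp only [Finset.mem_range] at hr
      rcases Nat.eq_zero_or_pos r with h0 | h0
      · -- r = 0
        subst h0
        rw [hGzero, if_pos rfl, if_pos (by omega : 0 ≤ n)]
        simp only [hG, Nat.sub_zero, Nat.add_zero]
        rw [if_pos (show (1 ≤ 1 ∧ 1 ≤ n+1) from ⟨le_refl 1, by omega⟩)]
        rw [show n+1-1 = n from by omega]
        rw [qPoch_succ q (n+1), qPoch_succ q n]
        rw [show (1:ℕ)^2 - 1 = 0 from by norm_num, pow_zero, one_mul]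
        rw [show q ^ (n+1+1) = q * (q*q^n) from by rw [← pow_succ', ← pow_succ'],
          show q ^ (n+2-1) = q*q^n from by rw [show n+2-1 = n+1 from rfl, ← pow_succ'],
          show q ^ (n+1) = q*q^n from by rw [← pow_succ']]
        have := tele_zero q (q*q^n) (qPoch q q n) (hone' n)
          (hone2 (n+1) _ (by ring)) (hpoch n)
        linear_combination this
      · rcases Nat.lt_or_ge r (n+1) with hlt | hge
        · -- 1 ≤ r ≤ n
          have hrn : r ≤ n := by omega
          rw [if_pos hrn, if_neg (by omega : ¬ (r = 0))]
          simp only [hG]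
          rw [if_pos (show (1 ≤ r ∧ r ≤ n+1) from ⟨by omega, by omega⟩),
            if_pos (show (1 ≤ r+1 ∧ r+1 ≤ n+1) from ⟨by omega, by omega⟩)]
          rw [alpha_eq r (by omega)]
          rw [show n+1-r = (n-r)+1 from by omega, qPoch_succ q (n-r),
            show n+1+r = (n+r)+1 from by omega,
            show n+1-(r+1) = n-r from by omega,
            show n+1+(r+1) = ((n+r)+1)+1 from by omega, qPoch_succ q ((n+r)+1),
            qPoch_succ q (n+r)]
          have hle : r ≤ r^2 := by nlinarith
          have hsq : (r+1)^2 = r^2+2*r+1 := by ring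
          rw [show q ^ (r^2+r) = q^(r^2-r) * (q^r*q^r) from by
              rw [← pow_add, ← pow_add]; congr 1; omega,
            show (r+1)^2 - (r+1) = (r^2-r) + (r+r) from by omega,
            show q ^ ((r^2-r)+(r+r)) = q^(r^2-r)*(q^r*q^r) from by
              rw [← pow_add, ← pow_add],
            show q ^ (n+r+1+1) = q*(q*(q^r*(q^r*q^(n-r)))) from by
              rw [← pow_add, ← pow_add, ← pow_succ', ← pow_succ']; congr 1; omega,
            show q ^ (n+2-(r+1)) = q*q^(n-r) from by
              rw [← pow_succ']; congr 1; omega,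
            show q ^ (n+1) = q*(q^r*q^(n-r)) from by
              rw [← pow_add, ← pow_succ']; congr 1; omega,
            show q ^ (n+r+1) = q*(q^r*(q^r*q^(n-r))) from by
              rw [← pow_add, ← pow_add, ← pow_succ']; congr 1; omega,
            show q ^ (n+2-r) = q*(q*q^(n-r)) from by
              rw [← pow_succ', ← pow_succ']; congr 1; omega,
            show q ^ (n+r) = q^r*(q^r*q^(n-r)) from by
              rw [← pow_add, ← pow_add]; congr 1; omega]
          have hb : (1:ℂ) - q*(q^r*q^(n-r)) ≠ 0 := hone2 (r+(n-r)) _ (by ring)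
          have h1 : (1:ℂ) - q*(q^r*(q^r*q^(n-r))) ≠ 0 := hone2 (r+(r+(n-r))) _ (by ring)
          have h2 : (1:ℂ) - q*(q*(q^r*(q^r*q^(n-r)))) ≠ 0 :=
            hone2 (r+(r+(n-r))+1) _ (by ring)
          have h3 : (1:ℂ) - q*q^(n-r) ≠ 0 := hone' (n-r)
          have := tele_mid q (q^r) (q^(n-r)) (q^(r^2-r)) (qPoch q q (n-r)) (qPoch q q (n+r))
            hb h1 h2 h3 (hpoch (n-r)) (hpoch (n+r))
          linear_combination this
        · -- r = n+1
          have hreq : r = n+1 := by omega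
          subst hreq
          rw [if_neg (by omega : ¬ (n+1 ≤ n)), if_neg (by omega : ¬ (n+1 = 0))]
          rw [show n+1+1 = n+2 from rfl, hGtop]
          simp only [hG]
          rw [if_pos (show (1 ≤ n+1 ∧ n+1 ≤ n+1) from ⟨by omega, le_refl _⟩)]
          rw [alpha_eq (n+1) (by omega)]
          rw [show n+1-(n+1) = 0 from by omega, qPoch_zero]
          have hle : n+1 ≤ (n+1)^2 := by nlinarith
          rw [show q ^ ((n+1)^2+(n+1)) = q^((n+1)^2-(n+1)) * (q^(n+1)*q^(n+1)) from by
              rw [← pow_add, ← pow_add]; congr 1; omega,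
            show q ^ (n+1+(n+1)) = q^(n+1)*q^(n+1) from by rw [← pow_add],
            show q ^ (n+2-(n+1)) = q from by
              rw [show n+2-(n+1) = 1 from by omega, pow_one]]
          have := tele_top q (q^(n+1)) (q^((n+1)^2-(n+1))) (qPoch q q (n+1+(n+1)))
            (hone n) (hpoch (n+1+(n+1)))
          linear_combination this
    have sumsub :
        (∑ r ∈ Finset.range (n+2),
          (if r = 0 then (1:ℂ) else q ^ (r ^ 2) * (q ^ r - (q ^ r)⁻¹)) /
            (qPoch q q (n+1-r) * qPoch q q (n+1+r)))
        - (∑ r ∈ Finset.range (n+1),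
            q/(1-q^(n+1))^2 *
              ((if r = 0 then (1:ℂ) else q ^ (r ^ 2) * (q ^ r - (q ^ r)⁻¹)) /
                (qPoch q q (n-r) * qPoch q q (n+r)))) = 0 := by
      have expand : (∑ r ∈ Finset.range (n+2),
              (if r ≤ n then q/(1-q^(n+1))^2 *
                ((if r = 0 then (1:ℂ) else q ^ (r ^ 2) * (q ^ r - (q ^ r)⁻¹)) /
                  (qPoch q q (n-r) * qPoch q q (n+r))) else 0))
          = (∑ r ∈ Finset.range (n+1),
            q/(1-q^(n+1))^2 *
              ((if r = 0 then (1:ℂ) else q ^ (r ^ 2) * (q ^ r - (q ^ r)⁻¹)) /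
                (qPoch q q (n-r) * qPoch q q (n+r)))) := by
        rw [Finset.sum_range_succ, if_neg (by omega : ¬ (n+1 ≤ n)), add_zero]
        exact Finset.sum_congr rfl fun r hr => by
          rw [if_pos (by simp only [Finset.mem_range] at hr; omega)]
      rw [← expand, ← Finset.sum_sub_distrib]
      rw [Finset.sum_congr rfl key, Finset.sum_range_sub, hGtop, hGzero, sub_zero]
    have main : (∑ r ∈ Finset.range (n+2),
          (if r = 0 then (1:ℂ) else q ^ (r ^ 2) * (q ^ r - (q ^ r)⁻¹)) /
            (qPoch q q (n+1-r) * qPoch q q (n+1+r)))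
        = q/(1-q^(n+1))^2 * (q^n / qPoch q q n ^ 2) := by
      rw [sub_eq_zero] at sumsub
      rw [sumsub, ← Finset.mul_sum, ← ih]
    have lhs_eq : q ^ (n+1) / qPoch q q (n+1) ^ 2
        = q/(1-q^(n+1))^2 * (q^n / qPoch q q n ^ 2) := by
      rw [qPoch_succ q n]
      have h1 : (1:ℂ) - q*q^n ≠ 0 := hone' n
      have h2 : qPoch q q n ≠ 0 := hpoch n
      rw [show q ^ (n+1) = q*q^n from by rw [← pow_succ']]
      field_simp
    rw [lhs_eq, ← main]
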